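/- arXiv:1911.10483 — 8 statements merged into one kernel-verified Lean document; each statement's English description precedes it below -/
import Mathlib

section
/- Let F be a free group of finite rank n with n ≥ 2. If H is a maximal subgroup of F of infinite index, then H is not finitely generated (hence, by the Nielsen–Schreier theorem, H is a free group of countably infinite rank). -/
open Equiv Subgroup

lemma exists_perm_extend' {α : Type*} [DecidableEq α] (S : Finset α) (e : Equiv.Perm α) :
    ∃ σ : Equiv.Perm {x // x ∈ S}, ∀ (q : α) (hq : q ∈ S) (h2 : e q ∈ S),
      σ ⟨q, hq⟩ = ⟨e q, h2⟩ := by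
  classical
  let p : {x // x ∈ S} → Prop := fun x => e ↑x ∈ S
  let q' : {x // x ∈ S} → Prop := fun x => e.symm ↑x ∈ S
  let e' : {x // p x} ≃ {x // q' x} :=
    { toFun := fun x => ⟨⟨e ↑↑x, x.2⟩, by simp [q']⟩
      invFun := fun x => ⟨⟨e.symm ↑↑x, x.2⟩, by simp [p]⟩
      left_inv := fun x => by ext; simp
      right_inv := fun x => by ext; simp }
  refine ⟨e'.extendSubtype, fun q hq h2 => ?_⟩
  have := e'.extendSubtype_apply_of_mem ⟨q, hq⟩ h2
  rw [this]; rfl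

lemma fg_separation {α : Type*} [DecidableEq α] (H : Subgroup (FreeGroup α)) (hFG : H.FG)
    (g : FreeGroup α) (hg : g ∉ H) :
    ∃ K : Subgroup (FreeGroup α), H ≤ K ∧ g ∉ K ∧ K.index ≠ 0 := by
  classical
  obtain ⟨T, hT⟩ := hFG
  set W : Finset (FreeGroup α) := insert g T with hW
  set S : Finset (FreeGroup α ⧸ H) := W.biUnion (fun w =>
    (Finset.range (w.toWord.length + 1)).image
      (fun i => ((FreeGroup.mk (w.toWord.drop i) : FreeGroup α) : FreeGroup α ⧸ H))) with hSdef
  have hS : ∀ w ∈ W, ∀ i : ℕ, ((FreeGroup.mk (w.toWord.drop i) : FreeGroup α) : FreeGroup α ⧸ H) ∈ S := by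
    intro w hw i
    rcases le_or_gt i w.toWord.length with h | h
    · exact Finset.mem_biUnion.2 ⟨w, hw, Finset.mem_image.2 ⟨i,
        Finset.mem_range.2 (by omega), rfl⟩⟩
    · have : w.toWord.drop i = w.toWord.drop w.toWord.length := by
        rw [List.drop_length, List.drop_eq_nil_of_le (le_of_lt h)]
      rw [this]
      exact Finset.mem_biUnion.2 ⟨w, hw, Finset.mem_image.2 ⟨w.toWord.length,
        Finset.mem_range.2 (by omega), rfl⟩⟩
  have hgW : g ∈ W := Finset.mem_insert_self _ _
  have hbase : ((1 : FreeGroup α) : FreeGroup α ⧸ H) ∈ S := by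
    have := hS g hgW g.toWord.length
    rwa [List.drop_length, show (FreeGroup.mk ([] : List (α × Bool)) : FreeGroup α) = 1 from rfl] at this
  set base : {x // x ∈ S} := ⟨((1 : FreeGroup α) : FreeGroup α ⧸ H), hbase⟩ with hbasedef
  set τ : α → Equiv.Perm (FreeGroup α ⧸ H) := fun a => MulAction.toPermHom (FreeGroup α) (FreeGroup α ⧸ H) (FreeGroup.of a) with hτ
  have hτapp : ∀ (a : α) (x : FreeGroup α), τ a ((x : FreeGroup α) : FreeGroup α ⧸ H) = ((FreeGroup.of a * x : FreeGroup α) : FreeGroup α ⧸ H) := by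
    intro a x; rfl
  have hτinv : ∀ (a : α) (x : FreeGroup α), (τ a)⁻¹ ((x : FreeGroup α) : FreeGroup α ⧸ H) = (((FreeGroup.of a)⁻¹ * x : FreeGroup α) : FreeGroup α ⧸ H) := by
    intro a x
    rw [hτ]; simp only [← map_inv]; rfl
  have hchoice : ∀ a : α, ∃ σ : Equiv.Perm {x // x ∈ S},
      ∀ (q : FreeGroup α ⧸ H) (hq : q ∈ S) (h2 : τ a q ∈ S), σ ⟨q, hq⟩ = ⟨τ a q, h2⟩ :=
    fun a => exists_perm_extend' S (τ a)
  choose σ hσ using hchoice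
  set φ : FreeGroup α →* Equiv.Perm {x // x ∈ S} := FreeGroup.lift σ with hφ
  have hφof : ∀ a : α, φ (FreeGroup.of a) = σ a := fun a => FreeGroup.lift_apply_of
  have hσinv : ∀ (a : α) (q : FreeGroup α ⧸ H) (hq : q ∈ S) (h2 : (τ a)⁻¹ q ∈ S),
      (σ a)⁻¹ ⟨q, hq⟩ = ⟨(τ a)⁻¹ q, h2⟩ := by
    intro a q hq h2
    have h3 : τ a ((τ a)⁻¹ q) ∈ S := by
      rwa [show τ a ((τ a)⁻¹ q) = q from (τ a).apply_symm_apply q]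
    have := hσ a ((τ a)⁻¹ q) h2 h3
    have h4 : (⟨τ a ((τ a)⁻¹ q), h3⟩ : {x // x ∈ S}) = ⟨q, hq⟩ := by
      apply Subtype.ext; exact (τ a).apply_symm_apply q
    rw [h4] at this
    rw [← this, Equiv.Perm.coe_inv (σ a), Equiv.symm_apply_apply]
  -- tracking lemma: the value of φ on a word all of whose suffix-cosets lie in S
  have track : ∀ l : List (α × Bool),
      (∀ i : ℕ, ((FreeGroup.mk (l.drop i) : FreeGroup α) : FreeGroup α ⧸ H) ∈ S) →
      ((φ (FreeGroup.mk l) base : {x // x ∈ S}) : FreeGroup α ⧸ H) = ((FreeGroup.mk l : FreeGroup α) : FreeGroup α ⧸ H) := by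
    intro l
    induction l with
    | nil =>
      intro _
      simp only [show (FreeGroup.mk ([] : List (α × Bool)) : FreeGroup α) = 1 from rfl, map_one]
      rfl
    | cons x l ih =>
      intro h
      obtain ⟨a, b⟩ := x
      have h' : ∀ i : ℕ, ((FreeGroup.mk (l.drop i) : FreeGroup α) : FreeGroup α ⧸ H) ∈ S := fun i => h (i + 1)
      have hl0 : ((FreeGroup.mk l : FreeGroup α) : FreeGroup α ⧸ H) ∈ S := by simpa using h' 0
      have hc0 : ((FreeGroup.mk ((a, b) :: l) : FreeGroup α) : FreeGroup α ⧸ H) ∈ S := by simpa using h 0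
      have e1 : (FreeGroup.mk ((a, b) :: l) : FreeGroup α) = FreeGroup.mk [(a, b)] * FreeGroup.mk l := by
        rw [FreeGroup.mul_mk]; rfl
      have ihe : φ (FreeGroup.mk l) base = ⟨((FreeGroup.mk l : FreeGroup α) : FreeGroup α ⧸ H), hl0⟩ :=
        Subtype.ext (ih h')
      rw [e1, map_mul, Equiv.Perm.mul_apply, ihe]
      cases b with
      | true =>
        have key : (FreeGroup.of a * FreeGroup.mk l : FreeGroup α) = FreeGroup.mk ((a, true) :: l) := by
          rw [show (FreeGroup.of a : FreeGroup α) = FreeGroup.mk [(a, true)] from rfl, FreeGroup.mul_mk]; rfl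
        have h2 : τ a ((FreeGroup.mk l : FreeGroup α) : FreeGroup α ⧸ H) ∈ S := by
          rw [hτapp a (FreeGroup.mk l), key]; exact hc0
        rw [show (FreeGroup.mk [(a, true)] : FreeGroup α) = FreeGroup.of a from rfl, hφof,
          hσ a _ hl0 h2]
        show τ a ((FreeGroup.mk l : FreeGroup α) : FreeGroup α ⧸ H) = _
        rw [hτapp a (FreeGroup.mk l), key]
      | false =>
        have key : ((FreeGroup.of a)⁻¹ * FreeGroup.mk l : FreeGroup α) = FreeGroup.mk ((a, false) :: l) := by
          rw [show ((FreeGroup.of a)⁻¹ : FreeGroup α) = FreeGroup.mk [(a, false)] from rfl, FreeGroup.mul_mk]; rfl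
        have h2 : (τ a)⁻¹ ((FreeGroup.mk l : FreeGroup α) : FreeGroup α ⧸ H) ∈ S := by
          rw [hτinv a (FreeGroup.mk l), key]; exact hc0
        rw [show (FreeGroup.mk [(a, false)] : FreeGroup α) = (FreeGroup.of a)⁻¹ from rfl, map_inv, hφof,
          hσinv a _ hl0 h2]
        show (τ a)⁻¹ ((FreeGroup.mk l : FreeGroup α) : FreeGroup α ⧸ H) = _
        rw [hτinv a (FreeGroup.mk l), key]
  -- the separating subgroup
  set K : Subgroup (FreeGroup α) := Subgroup.comap φ
    (MulAction.stabilizer (Equiv.Perm {x // x ∈ S}) base) with hK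
  have hmemK : ∀ x : FreeGroup α, x ∈ K ↔ φ x base = base := by
    intro x
    rw [hK, Subgroup.mem_comap, MulAction.mem_stabilizer_iff]
    rfl
  have hφval : ∀ w ∈ W, ((φ w base : {x // x ∈ S}) : FreeGroup α ⧸ H) = ((w : FreeGroup α) : FreeGroup α ⧸ H) := by
    intro w hw
    have := track w.toWord (hS w hw)
    rwa [FreeGroup.mk_toWord] at this
  refine ⟨K, ?_, ?_, ?_⟩
  · rw [← hT]
    rw [Subgroup.closure_le]
    intro w hw
    have hwW : w ∈ W := Finset.mem_insert_of_mem hw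
    have hwH : w ∈ H := hT ▸ Subgroup.subset_closure hw
    have : ((w : FreeGroup α) : FreeGroup α ⧸ H) = ((1 : FreeGroup α) : FreeGroup α ⧸ H) := by
      rw [QuotientGroup.eq]; simpa using Subgroup.inv_mem H hwH
    have := (hφval w hwW).trans this
    exact (hmemK w).2 (Subtype.ext this)
  · intro hgK
    have h1 : ((g : FreeGroup α) : FreeGroup α ⧸ H) = ((1 : FreeGroup α) : FreeGroup α ⧸ H) := by
      have := (hmemK g).1 hgK
      have := congrArg (Subtype.val) this
      rw [hφval g hgW] at this
      exact this
    rw [QuotientGroup.eq] at h1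
    exact hg (by simpa using Subgroup.inv_mem H h1)
  · -- K has finite index: F ⧸ K injects into the finite set S
    have wd : ∀ x y : FreeGroup α, QuotientGroup.leftRel K x y → φ x base = φ y base := by
      intro x y hxy
      rw [QuotientGroup.leftRel_apply] at hxy
      have := (hmemK _).1 hxy
      rw [map_mul, map_inv, Equiv.Perm.mul_apply] at this
      have := congrArg (φ x) this
      rw [Equiv.Perm.coe_inv (φ x), Equiv.apply_symm_apply] at this
      exact this.symm
    have inj : Function.Injective (fun q : FreeGroup α ⧸ K =>
        Quotient.liftOn' q (fun x => φ x base) wd) := by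
      intro x y
      induction x using Quotient.inductionOn'
      induction y using Quotient.inductionOn'
      rename_i x y
      intro hxy
      simp only [Quotient.liftOn'_mk''] at hxy
      apply Quotient.sound'
      rw [QuotientGroup.leftRel_apply]
      apply (hmemK _).2
      rw [map_mul, map_inv, Equiv.Perm.mul_apply, ← hxy, Equiv.Perm.coe_inv (φ x), Equiv.symm_apply_apply]
    have : Finite (FreeGroup α ⧸ K) := Finite.of_injective _ inj
    exact Subgroup.index_ne_zero_of_finite

/-- Every maximal subgroup of infinite index in a free group of finite rank `n ≥ 2`
is not finitely generated. -/
theorem maximal_infinite_index_subgroup_of_free_group_not_fg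
    (n : ℕ) (hn : 2 ≤ n) (H : Subgroup (FreeGroup (Fin n)))
    (hmax : IsCoatom H) (hinf : H.index = 0) : ¬ H.FG := by
  intro hFG
  have hne : H ≠ ⊤ := hmax.1
  have hex : ∃ g, g ∉ H := by
    by_contra hc
    push_neg at hc
    exact hne (Subgroup.eq_top_iff' H |>.2 hc)
  obtain ⟨g, hg⟩ := hex
  obtain ⟨K, hHK, hgK, hKind⟩ := fg_separation H hFG g hg
  have hne' : H ≠ K := fun h => hKind (h ▸ hinf)
  have : K = ⊤ := hmax.2 K (lt_of_le_of_ne hHK hne')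
  exact hgK (this ▸ Subgroup.mem_top g)
end

section
/- Let G be a nontrivial group. Then G is a simple group if and only if the diagonal subgroup Δ(G) = {(g, g) : g ∈ G} is a maximal subgroup of G × G. -/
/-- A nontrivial group `G` is simple iff the diagonal subgroup
`Δ(G) = {(g, g) : g ∈ G}` is a maximal subgroup of `G × G`. -/
theorem isSimpleGroup_iff_diagonal_isCoatom {G : Type*} [Group G] [Nontrivial G] :
    IsSimpleGroup G ↔ IsCoatom (((MonoidHom.id G).prod (MonoidHom.id G)).range) := by
  set Δ := ((MonoidHom.id G).prod (MonoidHom.id G)).range with hΔ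
  have memΔ : ∀ p : G × G, p ∈ Δ ↔ p.1 = p.2 := by
    rintro ⟨a, b⟩
    constructor
    · rintro ⟨g, hg⟩
      simp only [MonoidHom.prod_apply, MonoidHom.id_apply, Prod.mk.injEq] at hg
      rw [← hg.1, ← hg.2]
    · rintro h
      simp only at h
      exact ⟨a, by simp [Prod.ext_iff, h]⟩
  constructor
  · intro hs
    constructor
    · intro h
      obtain ⟨g, hg⟩ := exists_ne (1 : G)
      have : ((g, 1) : G × G) ∈ Δ := h ▸ Subgroup.mem_top _
      rw [memΔ] at this
      exact hg this
    · intro K hK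
      obtain ⟨⟨a, b⟩, haK, habΔ⟩ := SetLike.exists_of_lt hK
      have hd : ∀ g : G, ((g, g) : G × G) ∈ K := fun g => hK.le ((memΔ _).2 rfl)
      have hab : a ≠ b := fun h => habΔ ((memΔ _).2 h)
      -- N = {g | (g, 1) ∈ K}
      let N : Subgroup G := K.comap (MonoidHom.inl G G)
      have hNmem : ∀ g : G, g ∈ N ↔ ((g, 1) : G × G) ∈ K := fun g => Iff.rfl
      have hNnormal : N.Normal := by
        constructor
        intro n hn g
        have : ((g, g) : G × G) * (n, 1) * ((g, g) : G × G)⁻¹ ∈ K :=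
          mul_mem (mul_mem (hd g) hn) (inv_mem (hd g))
        simpa [hNmem] using this
      have hNne : N ≠ ⊥ := by
        intro hbot
        have hmem : a * b⁻¹ ∈ N := by
          rw [hNmem]
          have : ((a, b) : G × G) * ((b, b) : G × G)⁻¹ ∈ K := mul_mem haK (inv_mem (hd b))
          simpa using this
        rw [hbot, Subgroup.mem_bot] at hmem
        exact hab (by rw [← mul_inv_cancel b] at hmem; exact mul_right_cancel hmem)
      have hNtop : N = ⊤ := (hs.eq_bot_or_eq_top_of_normal N hNnormal).resolve_left hNne
      rw [eq_top_iff]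
      rintro ⟨x, y⟩ -
      have hx : ((x, 1) : G × G) ∈ K := by
        rw [← hNmem]; rw [hNtop]; trivial
      have hy : ((1, y) : G × G) ∈ K := by
        have hy1 : ((y, 1) : G × G) ∈ K := by rw [← hNmem]; rw [hNtop]; trivial
        have : ((y, y) : G × G) * ((y, 1) : G × G)⁻¹ ∈ K := mul_mem (hd y) (inv_mem hy1)
        simpa using this
      have : ((x, 1) : G × G) * (1, y) ∈ K := mul_mem hx hy
      simpa using this
  · intro h
    constructor
    intro N hN
    by_cases hbot : N = ⊥
    · exact Or.inl hbot
    right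
    obtain ⟨⟨n, hnN⟩, hn1'⟩ := Subgroup.ne_bot_iff_exists_ne_one.mp hbot
    have hn1 : n ≠ 1 := fun h => hn1' (Subtype.ext h)
    let K : Subgroup (G × G) :=
      { carrier := {p : G × G | p.1 * p.2⁻¹ ∈ N}
        one_mem' := by simpa using one_mem N
        mul_mem' := by
          rintro ⟨a₁, b₁⟩ ⟨a₂, b₂⟩ h1 h2
          simp only [Prod.mk_mul_mk, Set.mem_setOf_eq] at h1 h2 ⊢
          have : a₁ * a₂ * (b₁ * b₂)⁻¹ = (a₁ * (a₂ * b₂⁻¹) * a₁⁻¹) * (a₁ * b₁⁻¹) := by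
            group
          rw [this]
          exact mul_mem (hN.conj_mem _ h2 a₁) h1
        inv_mem' := by
          rintro ⟨a, b⟩ h1
          simp only [Prod.inv_mk, Set.mem_setOf_eq] at h1 ⊢
          have : a⁻¹ * b⁻¹⁻¹ = a⁻¹ * (a * b⁻¹)⁻¹ * a := by group
          rw [this]
          simpa using hN.conj_mem _ (inv_mem h1) a⁻¹ }
    have hle : Δ ≤ K := by
      rintro ⟨x, y⟩ hxy
      rw [memΔ] at hxy
      show x * y⁻¹ ∈ N
      simp only at hxy
      simp [hxy, one_mem]
    have hne : Δ ≠ K := by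
      intro heq
      have hK : ((n, 1) : G × G) ∈ K := by show n * (1 : G)⁻¹ ∈ N; simpa using hnN
      rw [← heq, memΔ] at hK
      exact hn1 hK
    have hΔK : Δ < K := lt_of_le_of_ne hle hne
    have hK : K = ⊤ := h.2 K hΔK
    rw [eq_top_iff]
    intro x _
    have hx : ((x, 1) : G × G) ∈ K := hK ▸ Subgroup.mem_top _
    have hx' : x * (1 : G)⁻¹ ∈ N := hx
    simpa using hx'
end

section
/- Let G be an infinite group admitting a faithful, 2-transitive action on a set X. Then G is I.C.C., i.e., for every g ∈ G with g ≠ 1 the conjugacy class {kgk⁻¹ : k ∈ G} is infinite. -/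
/-- An action of `G` on `X` is `n`-transitive if `|X| ≥ n` and any injective
`n`-tuple of points of `X` can be mapped to any other by some element of `G`. -/
def IsMultiplyTransitive (G X : Type*) [Group G] [MulAction G X] (n : ℕ) : Prop :=
  (∃ f : Fin n → X, Function.Injective f) ∧
    ∀ a b : Fin n → X, Function.Injective a → Function.Injective b →
      ∃ g : G, ∀ i, g • a i = b i

lemma inj2_aux {X : Type*} {a b : X} (h : a ≠ b) : Function.Injective ![a, b] := by
  intro i j hij
  fin_cases i <;> fin_cases j <;> simp_all

/-- An infinite group admitting a faithful, 2-transitive action is I.C.C.: every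
nontrivial conjugacy class is infinite. -/
theorem icc_of_faithful_two_transitive
    {G X : Type*} [Group G] [Infinite G] [MulAction G X] [FaithfulSMul G X]
    (h2 : IsMultiplyTransitive G X 2) (g : G) (hg : g ≠ 1) :
    {x : G | ∃ k : G, k * g * k⁻¹ = x}.Infinite := by
  have hX : Infinite X := by
    by_contra h
    rw [not_infinite_iff_finite] at h
    have : Finite G :=
      Finite.of_injective (MulAction.toPerm : G → Equiv.Perm X) MulAction.toPerm_injective
    exact not_finite G
  obtain ⟨a, ha⟩ : ∃ x : X, g • x ≠ x := by
    by_contra h; push_neg at h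
    exact hg (eq_of_smul_eq_smul (fun x : X => by rw [h x, one_smul]))
  have hcompl : ({a} : Set X)ᶜ.Infinite := (Set.finite_singleton a).infinite_compl
  have : Infinite (({a} : Set X)ᶜ : Set X) := hcompl.to_subtype
  have key : ∀ c : X, c ≠ a → ∃ h : G, (∃ k : G, k * g * k⁻¹ = h) ∧ h • a = c := by
    intro c hc
    obtain ⟨k, hk⟩ := h2.2 ![a, g • a] ![a, c] (inj2_aux (Ne.symm ha)) (inj2_aux hc.symm)
    have h0 := hk 0
    have h1 := hk 1
    simp only [Matrix.cons_val_zero, Matrix.cons_val_one, Matrix.head_cons] at h0 h1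
    refine ⟨k * g * k⁻¹, ⟨k, rfl⟩, ?_⟩
    have hka : k⁻¹ • a = a := by
      conv_lhs => rw [← h0]
      rw [inv_smul_smul]
    rw [mul_smul, mul_smul, hka, h1]
  choose f hf1 hf2 using key
  apply Set.infinite_of_injective_forall_mem
    (f := fun c : (({a} : Set X)ᶜ : Set X) => f c.1 (Set.mem_compl_singleton_iff.mp c.2))
  · intro c d hcd
    apply Subtype.ext
    have := congrArg (· • a) hcd
    simpa [hf2] using this
  · intro c
    exact hf1 c.1 (Set.mem_compl_singleton_iff.mp c.2)
end

section
/- Let G act faithfully and 4-transitively on an infinite set X. Let x ∈ X, let g ∈ G with g • x ≠ x, set y = g⁻¹ • x, and let K = Stab(x) ∩ Stab(y). Let τ ∈ G with τ ≠ 1, and assume that τ does not act on X as the transposition of x and y (i.e., it is not the case that τ • x = y, τ • y = x, and τ • z = z for every z ∈ X with z ≠ x and z ≠ y). Then the set {tτt⁻¹ : t ∈ K} is infinite. -/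
private lemma trans4 {G X : Type*} [Group G] [MulAction G X]
    (h4 : IsMultiplyTransitive G X 4) {a b c d a' b' c' d' : X}
    (hab : a ≠ b) (hac : a ≠ c) (had : a ≠ d) (hbc : b ≠ c) (hbd : b ≠ d) (hcd : c ≠ d)
    (hab' : a' ≠ b') (hac' : a' ≠ c') (had' : a' ≠ d') (hbc' : b' ≠ c') (hbd' : b' ≠ d')
    (hcd' : c' ≠ d') :
    ∃ t : G, t • a = a' ∧ t • b = b' ∧ t • c = c' ∧ t • d = d' := by
  obtain ⟨t, ht⟩ := h4.2 ![a, b, c, d] ![a', b', c', d']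
    (by intro i j hij; fin_cases i <;> fin_cases j <;> simp_all)
    (by intro i j hij; fin_cases i <;> fin_cases j <;> simp_all)
  exact ⟨t, by simpa using ht 0, by simpa using ht 1, by simpa using ht 2, by simpa using ht 3⟩

/-- For a faithful, 4-transitive action of `G` on an infinite set `X`, with
`x ∈ X`, `g • x ≠ x`, `y = g⁻¹ • x`, and `K = Stab(x) ∩ Stab(y)`: if `τ ≠ 1` does
not act as the transposition of `x` and `y`, then the `K`-conjugates of `τ` form
an infinite set. -/
theorem infinite_conjugates_of_faithful_four_transitive
    {G X : Type*} [Group G] [MulAction G X] [FaithfulSMul G X] [Infinite X]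
    (h4 : IsMultiplyTransitive G X 4) (x : X) (g : G) (hgx : g • x ≠ x)
    (τ : G) (hτ : τ ≠ 1)
    (hστ : ¬ (τ • x = g⁻¹ • x ∧ τ • (g⁻¹ • x) = x ∧
      ∀ z : X, z ≠ x → z ≠ g⁻¹ • x → τ • z = z)) :
    {a : G | ∃ t ∈ MulAction.stabilizer G x ⊓ MulAction.stabilizer G (g⁻¹ • x),
      t * τ * t⁻¹ = a}.Infinite := by
  set y := g⁻¹ • x with hy
  have hyx : y ≠ x := by
    rw [hy, Ne, inv_smul_eq_iff]
    intro h
    exact hgx h.symm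
  -- Step 1: find z ∉ {x, y} moved by τ
  obtain ⟨z, hzx, hzy, hzτ⟩ : ∃ z : X, z ≠ x ∧ z ≠ y ∧ τ • z ≠ z := by
    by_contra h
    push_neg at h
    have hfix : ∀ z : X, z ≠ x → z ≠ y → τ • z = z := fun z h1 h2 => h z h1 h2
    have hgen : ∀ p : X, τ • p ≠ p → τ • p = x ∨ τ • p = y := by
      intro p hp
      by_contra hc
      push_neg at hc
      have := hfix (τ • p) hc.1 hc.2
      exact hp (MulAction.injective τ this)
    by_cases hx1 : τ • x = x
    · by_cases hy1 : τ • y = y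
      · apply hτ
        apply eq_of_smul_eq_smul (α := X)
        intro a
        rw [one_smul]
        by_cases h1 : a = x
        · rw [h1, hx1]
        · by_cases h2 : a = y
          · rw [h2, hy1]
          · exact hfix a h1 h2
      · rcases hgen y hy1 with h' | h'
        · exact hyx (MulAction.injective τ (h'.trans hx1.symm))
        · exact hy1 h'
    · rcases hgen x hx1 with h' | h'
      · exact hx1 h'
      · by_cases hy1 : τ • y = y
        · exact hyx (MulAction.injective τ (hy1.trans h'.symm))
        · rcases hgen y hy1 with h'' | h''
          · exact hστ ⟨h', h'', hfix⟩
          · exact hy1 h''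
  -- Step 2: produce a point P and, for each u outside {x,y,z}, a conjugate mapping P to u
  have key : ∃ P : X, ∀ u : X, u ∉ ({x, y, z} : Set X) →
      ∃ a ∈ {a : G | ∃ t ∈ MulAction.stabilizer G x ⊓ MulAction.stabilizer G y,
        t * τ * t⁻¹ = a}, a⁻¹ • P = u := by
    by_cases hw : τ • z = x ∨ τ • z = y
    · refine ⟨τ • z, fun u hu => ?_⟩
      simp only [Set.mem_insert_iff, Set.mem_singleton_iff, not_or] at hu
      obtain ⟨hux, huy, huz⟩ := hu
      obtain ⟨p, hp⟩ := (Set.toFinite ({x, y, z} : Set X)).infinite_compl.nonempty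
      obtain ⟨q, hq⟩ := (Set.toFinite ({x, y, u} : Set X)).infinite_compl.nonempty
      simp only [Set.mem_compl_iff, Set.mem_insert_iff, Set.mem_singleton_iff, not_or] at hp hq
      obtain ⟨t, ht1, ht2, ht3, ht4⟩ := trans4 h4 (a := x) (b := y) (c := z) (d := p)
        (a' := x) (b' := y) (c' := u) (d' := q)
        (Ne.symm hyx) (Ne.symm hzx) (Ne.symm hp.1) (Ne.symm hzy) (Ne.symm hp.2.1) (Ne.symm hp.2.2)
        (Ne.symm hyx) (Ne.symm hux) (Ne.symm hq.1) (Ne.symm huy) (Ne.symm hq.2.1)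
        (Ne.symm hq.2.2)
      refine ⟨t * τ * t⁻¹, ⟨t, ?_, rfl⟩, ?_⟩
      · exact Subgroup.mem_inf.mpr ⟨ht1, ht2⟩
      · rw [inv_smul_eq_iff]
        have htu : t⁻¹ • u = z := by rw [inv_smul_eq_iff, ht3]
        rw [mul_smul, mul_smul, htu]
        rcases hw with h' | h'
        · rw [h', ht1]
        · rw [h', ht2]
    · push_neg at hw
      have hwz : τ • z ≠ z := hzτ
      refine ⟨z, fun u hu => ?_⟩
      simp only [Set.mem_insert_iff, Set.mem_singleton_iff, not_or] at hu
      obtain ⟨hux, huy, huz⟩ := hu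
      obtain ⟨t, ht1, ht2, ht3, ht4⟩ := trans4 h4 (a := x) (b := y) (c := z) (d := τ • z)
        (a' := x) (b' := y) (c' := u) (d' := z)
        (Ne.symm hyx) (Ne.symm hzx) (Ne.symm hw.1) (Ne.symm hzy) (Ne.symm hw.2) (Ne.symm hwz)
        (Ne.symm hyx) (Ne.symm hux) (Ne.symm hzx) (Ne.symm huy) (Ne.symm hzy) huz
      refine ⟨t * τ * t⁻¹, ⟨t, ?_, rfl⟩, ?_⟩
      · exact Subgroup.mem_inf.mpr ⟨ht1, ht2⟩
      · rw [inv_smul_eq_iff]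
        have htu : t⁻¹ • u = z := by rw [inv_smul_eq_iff, ht3]
        rw [mul_smul, mul_smul, htu, ht4]
  obtain ⟨P, key⟩ := key
  choose! f hf1 hf2 using key
  have hS : (({x, y, z} : Set X)ᶜ).Infinite := (Set.toFinite _).infinite_compl
  have hinj : Set.InjOn f (({x, y, z} : Set X)ᶜ) := by
    intro u hu u' hu' h
    rw [← hf2 u hu, ← hf2 u' hu', h]
  exact (hS.image hinj).mono (by rintro a ⟨u, hu, rfl⟩; exact hf1 u hu)
end

section
/- Let G act faithfully and 4-transitively on an infinite set X, let x, y ∈ X with x ≠ y, and let K = Stab(x) ∩ Stab(y). Then for every τ ∈ K with τ ≠ 1, the set {tτt⁻¹ : t ∈ K} is infinite. -/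
set_option maxRecDepth 8000


private lemma inj4_of_ne {X : Type*} {a b c d : X} (hab : a ≠ b) (hac : a ≠ c)
    (had : a ≠ d) (hbc : b ≠ c) (hbd : b ≠ d) (hcd : c ≠ d) :
    Function.Injective ![a, b, c, d] := by
  intro i j h
  fin_cases i <;> fin_cases j <;>
    simp only [Fin.isValue, Matrix.cons_val_zero, Matrix.cons_val_one, Matrix.head_cons,
      Matrix.cons_val_two, Matrix.tail_cons, Matrix.cons_val_three] at h ⊢ <;>
    first
      | rfl
      | exact absurd h hab | exact absurd h.symm hab
      | exact absurd h hac | exact absurd h.symm hac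
      | exact absurd h had | exact absurd h.symm had
      | exact absurd h hbc | exact absurd h.symm hbc
      | exact absurd h hbd | exact absurd h.symm hbd
      | exact absurd h hcd | exact absurd h.symm hcd

/-- For a faithful, 4-transitive action of `G` on an infinite set `X` and distinct
points `x ≠ y` with `K = Stab(x) ∩ Stab(y)`, every nontrivial element of `K` has
infinitely many `K`-conjugates. -/
theorem two_point_stabilizer_icc_of_faithful_four_transitive
    {G X : Type*} [Group G] [MulAction G X] [FaithfulSMul G X] [Infinite X]
    (h4 : IsMultiplyTransitive G X 4) (x y : X) (hxy : x ≠ y)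
    (τ : G) (hτK : τ ∈ MulAction.stabilizer G x ⊓ MulAction.stabilizer G y)
    (hτ : τ ≠ 1) :
    {a : G | ∃ t ∈ MulAction.stabilizer G x ⊓ MulAction.stabilizer G y,
      t * τ * t⁻¹ = a}.Infinite := by
  obtain ⟨hτx', hτy'⟩ := hτK
  have hτx : τ • x = x := hτx'
  have hτy : τ • y = y := hτy'
  have hex : ¬ ∀ z : X, τ • z = z := by
    intro h
    exact hτ (eq_of_smul_eq_smul (α := X) (fun a => by simp [h a]))
  push_neg at hex
  obtain ⟨z, hz⟩ := hex
  have hzx : z ≠ x := fun h => hz (by rw [h, hτx])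
  have hzy : z ≠ y := fun h => hz (by rw [h, hτy])
  have hτzx : τ • z ≠ x := fun h => hzx (smul_left_cancel τ (by rw [h, hτx]))
  have hτzy : τ • z ≠ y := fun h => hzy (smul_left_cancel τ (by rw [h, hτy]))
  have hinf : (({x, y, z} : Set X)ᶜ).Infinite :=
    Set.Finite.infinite_compl (by simp)
  haveI : Infinite ↥(({x, y, z} : Set X)ᶜ) := Set.infinite_coe_iff.mpr hinf
  have hinj1 : Function.Injective ![x, y, z, τ • z] :=
    inj4_of_ne hxy hzx.symm (Ne.symm hτzx) hzy.symm (Ne.symm hτzy) (Ne.symm hz)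
  have key : ∀ w : ↥(({x, y, z} : Set X)ᶜ),
      ∃ t : G, t • x = x ∧ t • y = y ∧ t • z = z ∧ t • (τ • z) = (w : X) := by
    rintro ⟨w, hw⟩
    simp only [Set.mem_compl_iff, Set.mem_insert_iff, Set.mem_singleton_iff, not_or] at hw
    obtain ⟨hwx, hwy, hwz⟩ := hw
    have hinj2 : Function.Injective ![x, y, z, w] :=
      inj4_of_ne hxy hzx.symm (Ne.symm hwx) hzy.symm (Ne.symm hwy) (Ne.symm hwz)
    obtain ⟨g, hg⟩ := h4.2 ![x, y, z, τ • z] ![x, y, z, w] hinj1 hinj2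
    exact ⟨g, by simpa using hg 0, by simpa using hg 1, by simpa using hg 2,
      by simpa using hg 3⟩
  choose t htx hty htz htτz using key
  have hval : ∀ w, (t w * τ * (t w)⁻¹) • z = (w : X) := by
    intro w
    have h1 : (t w)⁻¹ • z = z := by
      rw [inv_smul_eq_iff, htz w]
    rw [mul_smul, mul_smul, h1, htτz w]
  apply Set.infinite_of_injective_forall_mem
    (f := fun w => t w * τ * (t w)⁻¹)
  · intro w1 w2 h
    have h' : t w1 * τ * (t w1)⁻¹ = t w2 * τ * (t w2)⁻¹ := h
    have := hval w1
    rw [h', hval w2] at this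
    exact (Subtype.ext this).symm
  · intro w
    exact ⟨t w, ⟨htx w, hty w⟩, rfl⟩
end

section
/- Let G act faithfully and 3-transitively on an infinite set X, and let x ∈ X. Then the stabilizer subgroup Stab(x) is relative I.C.C. in G; that is, for every g ∈ G with g ≠ 1, the set {hgh⁻¹ : h ∈ Stab(x)} is infinite. -/
private lemma aux_inj3 {X : Type*} {a0 a1 a2 : X} (h01 : a0 ≠ a1) (h02 : a0 ≠ a2)
    (h12 : a1 ≠ a2) : Function.Injective ![a0, a1, a2] := by
  intro i j hij
  fin_cases i <;> fin_cases j <;> simp_all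

private lemma aux_three {G X : Type*} [Group G] [MulAction G X]
    (h3 : IsMultiplyTransitive G X 3) {a0 a1 a2 b0 b1 b2 : X}
    (ha01 : a0 ≠ a1) (ha02 : a0 ≠ a2) (ha12 : a1 ≠ a2)
    (hb01 : b0 ≠ b1) (hb02 : b0 ≠ b2) (hb12 : b1 ≠ b2) :
    ∃ g : G, g • a0 = b0 ∧ g • a1 = b1 ∧ g • a2 = b2 := by
  obtain ⟨g, hgi⟩ := h3.2 ![a0, a1, a2] ![b0, b1, b2]
    (aux_inj3 ha01 ha02 ha12) (aux_inj3 hb01 hb02 hb12)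
  refine ⟨g, ?_, ?_, ?_⟩
  · simpa using hgi 0
  · simpa using hgi 1
  · simpa using hgi 2

private lemma aux_two {G X : Type*} [Group G] [MulAction G X] [Infinite X]
    (h3 : IsMultiplyTransitive G X 3) {a0 a1 b0 b1 : X}
    (ha : a0 ≠ a1) (hb : b0 ≠ b1) :
    ∃ g : G, g • a0 = b0 ∧ g • a1 = b1 := by
  obtain ⟨a2, ha2⟩ := (Set.toFinite {a0, a1}).infinite_compl.nonempty
  obtain ⟨b2, hb2⟩ := (Set.toFinite {b0, b1}).infinite_compl.nonempty
  simp only [Set.mem_compl_iff, Set.mem_insert_iff, Set.mem_singleton_iff, not_or] at ha2 hb2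
  obtain ⟨g, h0, h1, _⟩ := aux_three h3 ha (Ne.symm ha2.1) (Ne.symm ha2.2)
    hb (Ne.symm hb2.1) (Ne.symm hb2.2)
  exact ⟨g, h0, h1⟩

private lemma aux_compl_infinite {X : Type*} [Infinite X] (s : Set X) (hs : s.Finite) :
    Infinite ↥sᶜ :=
  Set.infinite_coe_iff.mpr hs.infinite_compl

/-- For a faithful, 3-transitive action of `G` on an infinite set `X`, the point
stabilizer `Stab(x)` is relative I.C.C. in `G`: every `g ≠ 1` has infinitely many
conjugates by elements of `Stab(x)`. -/
theorem stabilizer_relative_icc_of_faithful_three_transitive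
    {G X : Type*} [Group G] [MulAction G X] [FaithfulSMul G X] [Infinite X]
    (h3 : IsMultiplyTransitive G X 3) (x : X) (g : G) (hg : g ≠ 1) :
    {a : G | ∃ h ∈ MulAction.stabilizer G x, h * g * h⁻¹ = a}.Infinite := by
  set S := {a : G | ∃ h ∈ MulAction.stabilizer G x, h * g * h⁻¹ = a} with hS
  -- find a point moved by g
  have hy : ∃ y : X, g • y ≠ y := by
    by_contra hy
    push_neg at hy
    exact hg (eq_of_smul_eq_smul (M := G) (α := X) (fun a => by simp [hy a]))
  obtain ⟨y, hgy⟩ := hy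
  by_cases hyx : y = x
  · -- case B : g • x ≠ x
    subst hyx
    haveI : Infinite ↥({y} : Set X)ᶜ := aux_compl_infinite _ (Set.toFinite _)
    have key : ∀ t : ↥({y} : Set X)ᶜ, ∃ a, a ∈ S ∧ a • y = (t : X) := by
      rintro ⟨t, ht⟩
      simp only [Set.mem_compl_iff, Set.mem_singleton_iff] at ht
      obtain ⟨h, hh1, hh2⟩ := aux_two h3 (a0 := y) (a1 := g • y) (b0 := y) (b1 := t)
        (Ne.symm hgy) (Ne.symm ht)
      refine ⟨h * g * h⁻¹, ⟨h, hh1, rfl⟩, ?_⟩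
      have : h⁻¹ • y = y := by
        rw [inv_smul_eq_iff, hh1]
      simp [mul_smul, this, hh2]
    choose F hF1 hF2 using key
    apply Set.infinite_of_injective_forall_mem (f := F) _ hF1
    intro t1 t2 h12
    have := hF2 t1
    rw [h12, hF2 t2] at this
    exact Subtype.ext this.symm
  · by_cases hgyx : g • y = x
    · -- case C : g • y = x, y ≠ x
      haveI : Infinite ↥({x} : Set X)ᶜ := aux_compl_infinite _ (Set.toFinite _)
      have key : ∀ t : ↥({x} : Set X)ᶜ, ∃ a, a ∈ S ∧ a⁻¹ • x = (t : X) := by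
        rintro ⟨t, ht⟩
        simp only [Set.mem_compl_iff, Set.mem_singleton_iff] at ht
        obtain ⟨h, hh1, hh2⟩ := aux_two h3 (a0 := x) (a1 := y) (b0 := x) (b1 := t)
          (Ne.symm hyx) (Ne.symm ht)
        refine ⟨h * g * h⁻¹, ⟨h, hh1, rfl⟩, ?_⟩
        have hinv : g⁻¹ • x = y := by rw [inv_smul_eq_iff, hgyx]
        have hxinv : h⁻¹ • x = x := by rw [inv_smul_eq_iff, hh1]
        simp only [mul_inv_rev, inv_inv, mul_smul, hxinv, hinv, hh2]
      choose F hF1 hF2 using key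
      apply Set.infinite_of_injective_forall_mem (f := F) _ hF1
      intro t1 t2 h12
      have := hF2 t1
      rw [h12, hF2 t2] at this
      exact Subtype.ext this.symm
    · -- case A : y ≠ x, g•y ≠ y, g•y ≠ x
      haveI : Infinite ↥({x, y} : Set X)ᶜ := aux_compl_infinite _ (Set.toFinite _)
      have key : ∀ t : ↥({x, y} : Set X)ᶜ, ∃ a, a ∈ S ∧ a • y = (t : X) := by
        rintro ⟨t, ht⟩
        simp only [Set.mem_compl_iff, Set.mem_insert_iff, Set.mem_singleton_iff, not_or] at ht
        obtain ⟨h, hh1, hh2, hh3⟩ := aux_three h3 (a0 := x) (a1 := y) (a2 := g • y)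
          (b0 := x) (b1 := y) (b2 := t)
          (Ne.symm hyx) (Ne.symm hgyx) (Ne.symm hgy) (Ne.symm hyx) (Ne.symm ht.1) (Ne.symm ht.2)
        refine ⟨h * g * h⁻¹, ⟨h, hh1, rfl⟩, ?_⟩
        have hyinv : h⁻¹ • y = y := by rw [inv_smul_eq_iff, hh2]
        simp [mul_smul, hyinv, hh3]
      choose F hF1 hF2 using key
      apply Set.infinite_of_injective_forall_mem (f := F) _ hF1
      intro t1 t2 h12
      have := hF2 t1
      rw [h12, hF2 t2] at this
      exact Subtype.ext this.symm
end

section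
/- Let G be a group with exactly two conjugacy classes, i.e., G is nontrivial and any two nontrivial elements of G are conjugate. Then the left-right shift action of G × G on G, given by (g, h) • x = g x h⁻¹, is 2-transitive: for any a₁, a₂ ∈ G with a₁ ≠ a₂ and any b₁, b₂ ∈ G with b₁ ≠ b₂, there exist g, h ∈ G with g a₁ h⁻¹ = b₁ and g a₂ h⁻¹ = b₂. -/
/-- If `G` is a nontrivial group in which any two nontrivial elements are
conjugate, then the left-right shift action of `G × G` on `G` given by
`(g, h) • x = g * x * h⁻¹` is 2-transitive. -/
theorem left_right_shift_two_transitive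
    {G : Type*} [Group G] [Nontrivial G]
    (hconj : ∀ a b : G, a ≠ 1 → b ≠ 1 → ∃ k : G, k * a * k⁻¹ = b)
    (a₁ a₂ b₁ b₂ : G) (ha : a₁ ≠ a₂) (hb : b₁ ≠ b₂) :
    ∃ g h : G, g * a₁ * h⁻¹ = b₁ ∧ g * a₂ * h⁻¹ = b₂ := by
  obtain ⟨k, hk⟩ := hconj (a₁ * a₂⁻¹) (b₁ * b₂⁻¹)
    (by simpa [mul_inv_eq_one] using ha) (by simpa [mul_inv_eq_one] using hb)
  refine ⟨k, b₁⁻¹ * (k * a₁), ?_, ?_⟩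
  · group
  · have : k * a₂ * (b₁⁻¹ * (k * a₁))⁻¹ = (k * (a₁ * a₂⁻¹) * k⁻¹)⁻¹ * b₁ := by group
    rw [this, hk]; group
end

section
/- Let G be a group, H a subgroup of infinite index in G, and g ∈ G. Assume G = H ∪ HgH, i.e., every element of G either lies in H or can be written h₁ g h₂ with h₁, h₂ ∈ H. Then there exists h ∈ H such that g h g ∈ HgH, i.e., g h g = h₁ g h₂ for some h₁, h₂ ∈ H. -/
/-- If `H` has infinite index in `G` and `G = H ∪ HgH`, then `g * h * g ∈ HgH`
for some `h ∈ H`. -/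
theorem exists_ghg_mem_doset
    {G : Type*} [Group G] (H : Subgroup G) (hinf : H.index = 0) (g : G)
    (hcover : ∀ k : G, k ∈ H ∨ ∃ h₁ ∈ H, ∃ h₂ ∈ H, k = h₁ * g * h₂) :
    ∃ h ∈ H, ∃ h₁ ∈ H, ∃ h₂ ∈ H, g * h * g = h₁ * g * h₂ := by
  by_contra hc
  push_neg at hc
  have key : ∀ h ∈ H, g * h * g ∈ H := by
    intro h hh
    rcases hcover (g * h * g) with h1 | ⟨h₁, hh₁, h₂, hh₂, heq⟩
    · exact h1
    · exact absurd heq (hc h hh h₁ hh₁ h₂ hh₂)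
  have hg2 : g * g ∈ H := by simpa using key 1 H.one_mem
  have conj : ∀ h ∈ H, g⁻¹ * h * g ∈ H := by
    intro h hh
    have h' := H.mul_mem (H.inv_mem hg2) (key h hh)
    convert h' using 1
    group
  have cosets : ∀ k : G, (k : G ⧸ H) = ((1 : G) : G ⧸ H) ∨
      (k : G ⧸ H) = ((g : G) : G ⧸ H) := by
    intro k
    rcases hcover k with hk | ⟨h₁, hh₁, h₂, hh₂, rfl⟩
    · left
      rw [QuotientGroup.eq]
      simpa using H.inv_mem hk
    · right
      rw [QuotientGroup.eq]
      have h' := H.mul_mem (H.inv_mem hh₂) (conj h₁⁻¹ (H.inv_mem hh₁))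
      convert h' using 1
      group
  haveI : Finite (G ⧸ H) := by
    apply Finite.of_surjective
      (fun b : Bool => if b then ((g : G) : G ⧸ H) else ((1 : G) : G ⧸ H))
    intro x
    induction x using QuotientGroup.induction_on with
    | H k =>
      rcases cosets k with h | h
      · exact ⟨false, h.symm⟩
      · exact ⟨true, h.symm⟩
  exact Subgroup.index_ne_zero_of_finite hinf
end
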